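/- Let Z1 ~ N(μ1, 1) and Z2 ~ N(μ2, σ2²) be independent Gaussian random variables with σ2 > 0, let z0 ∈ ℝ, and set Z = Z1 Z2 + z0. Then for any f* ∈ ℝ, E[max(f* − Z, 0)] = ∫_{-∞}^{∞} φ(t − μ1) [ (f* − z0 − t μ2) Φ(u2(t)) + |t| σ2 φ(u2(t)) ] dt, where u2(t) = (f* − z0 − t μ2)/(|t| σ2) and φ, Φ are the standard normal pdf and cdf (the Nested Expected Improvement formula). -/

import Mathlib

open MeasureTheory ProbabilityTheory
open scoped NNReal ENNReal

/-- The standard normal probability density function `φ`. -/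
noncomputable def stdNormalPdf (u : ℝ) : ℝ :=
  (Real.sqrt (2 * Real.pi))⁻¹ * Real.exp (-u ^ 2 / 2)

/-- The standard normal cumulative distribution function `Φ`. -/
noncomputable def stdNormalCdf (u : ℝ) : ℝ :=
  ∫ s in Set.Iic u, stdNormalPdf s

open MeasureTheory ProbabilityTheory Real Filter Set
open scoped NNReal ENNReal Topology

lemma stdNormalPdf_eq (u : ℝ) : stdNormalPdf u = gaussianPDFReal 0 1 u := by
  simp [stdNormalPdf, gaussianPDFReal, neg_div]

lemma setInt_pdf_toReal (μ : ℝ) {v : ℝ≥0} (hv : v ≠ 0) {s : Set ℝ} (hs : MeasurableSet s) :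
    ∫ x in s, gaussianPDFReal μ v x = ((gaussianReal μ v) s).toReal := by
  rw [gaussianReal_apply_eq_integral _ hv s, ENNReal.toReal_ofReal]
  exact setIntegral_nonneg hs (fun x _ => gaussianPDFReal_nonneg μ v x)

lemma stdNormalCdf_eq_measure (u : ℝ) :
    stdNormalCdf u = ((gaussianReal 0 1) (Iic u)).toReal := by
  rw [stdNormalCdf, ← setInt_pdf_toReal 0 one_ne_zero measurableSet_Iic]
  exact setIntegral_congr_fun measurableSet_Iic (fun x _ => stdNormalPdf_eq x)

lemma gaussianReal_map_affine (μ : ℝ) {v : ℝ≥0} (hv : v ≠ 0) :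
    (gaussianReal 0 1).map (fun z => Real.sqrt v * z + μ) = gaussianReal μ v := by
  have h1 : (gaussianReal 0 1).map (fun z => Real.sqrt v * z) = gaussianReal 0 v := by
    rw [show (fun z : ℝ => Real.sqrt v * z) = ((Real.sqrt v : ℝ) * ·) from rfl,
      gaussianReal_map_const_mul]
    congr 1
    · ring
    · ext
      simp [Real.sq_sqrt (v.coe_nonneg)]
  have : (fun z : ℝ => Real.sqrt v * z + μ) = (· + μ) ∘ (fun z => Real.sqrt v * z) := rfl
  rw [this, ← Measure.map_map (measurable_id'.add_const μ)
      (measurable_const_mul _), h1, gaussianReal_map_add_const]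
  simp

lemma gaussianReal_Iic (μ : ℝ) {v : ℝ≥0} (hv : v ≠ 0) (x : ℝ) :
    (gaussianReal μ v) (Iic x) = (gaussianReal 0 1) (Iic ((x - μ) / Real.sqrt v)) := by
  have hs : (0:ℝ) < Real.sqrt v := Real.sqrt_pos.2 (by positivity)
  rw [← gaussianReal_map_affine μ hv,
    Measure.map_apply (by fun_prop) measurableSet_Iic]
  congr 1
  ext z
  simp only [mem_preimage, mem_Iic]
  rw [le_div_iff₀ hs]
  constructor <;> intro h <;> nlinarith [h]

lemma integral_Iic_gaussianPDFReal (μ : ℝ) {v : ℝ≥0} (hv : v ≠ 0) (x : ℝ) :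
    ∫ s in Iic x, gaussianPDFReal μ v s = stdNormalCdf ((x - μ) / Real.sqrt v) := by
  rw [setInt_pdf_toReal μ hv measurableSet_Iic, gaussianReal_Iic μ hv, stdNormalCdf_eq_measure]

lemma gaussianReal_singleton (μ : ℝ) {v : ℝ≥0} (hv : v ≠ 0) (x : ℝ) :
    (gaussianReal μ v) {x} = 0 :=
  gaussianReal_absolutelyContinuous μ hv (volume_singleton)

lemma gaussian01_Iic_neg (z : ℝ) :
    (gaussianReal 0 1) (Iic (-z)) = (gaussianReal 0 1) (Ioi z) := by
  have hmap : (gaussianReal 0 1).map ((-1 : ℝ) * ·) = gaussianReal 0 1 := by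
    rw [gaussianReal_map_const_mul]
    norm_num
  conv_lhs => rw [← hmap]
  rw [Measure.map_apply (measurable_const_mul _) measurableSet_Iic]
  have : ((-1 : ℝ) * ·) ⁻¹' (Iic (-z)) = Ici z := by
    ext y; simp only [mem_preimage, mem_Iic, mem_Ici]; constructor <;> intro h <;> linarith
  rw [this, ← Ioi_union_left, measure_union (by simp) (measurableSet_singleton z),
    gaussianReal_singleton 0 one_ne_zero z, add_zero]

lemma integral_Ioi_gaussianPDFReal (μ : ℝ) {v : ℝ≥0} (hv : v ≠ 0) (x : ℝ) :
    ∫ s in Ioi x, gaussianPDFReal μ v s = stdNormalCdf (-((x - μ) / Real.sqrt v)) := by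
  rw [setInt_pdf_toReal μ hv measurableSet_Ioi, stdNormalCdf_eq_measure, gaussian01_Iic_neg]
  congr 1
  have h1 : (gaussianReal μ v) (Iic x) = (gaussianReal 0 1) (Iic ((x - μ) / Real.sqrt v)) :=
    gaussianReal_Iic μ hv x
  have h2 : ∀ (ν : Measure ℝ) (y : ℝ), IsProbabilityMeasure ν →
      ν (Ioi y) = 1 - ν (Iic y) := by
    intro ν y hν
    rw [← compl_Iic, measure_compl measurableSet_Iic (measure_ne_top ν _), measure_univ]
  rw [h2 _ _ inferInstance, h2 _ _ inferInstance, h1]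

lemma integral_fun_gaussianReal (μ : ℝ) {v : ℝ≥0} (hv : v ≠ 0) (g : ℝ → ℝ) :
    ∫ x, g x ∂(gaussianReal μ v) = ∫ x, gaussianPDFReal μ v x * g x := by
  rw [gaussianReal_of_var_ne_zero _ hv]
  have : (gaussianPDF μ v) = fun x => ((gaussianPDFReal μ v x).toNNReal : ℝ≥0∞) := by
    ext x; simp [gaussianPDF, ENNReal.ofReal]
  rw [this, integral_withDensity_eq_integral_smul
    ((measurable_gaussianPDFReal μ v).real_toNNReal) g]
  congr 1 with x
  simp [NNReal.smul_def, Real.coe_toNNReal _ (gaussianPDFReal_nonneg μ v x)]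

lemma hasDerivAt_gaussianPDFReal (μ : ℝ) {v : ℝ≥0} (hv : v ≠ 0) (x : ℝ) :
    HasDerivAt (gaussianPDFReal μ v) (-((x - μ) / v) * gaussianPDFReal μ v x) x := by
  have hv' : (0:ℝ) < v := by positivity
  have hg : HasDerivAt (fun x : ℝ => -(x - μ)^2 / (2*v)) (-((x - μ)/v)) x := by
    have h1 : HasDerivAt (fun x : ℝ => (x - μ)^2) (2*(x-μ)) x := by
      simpa using ((hasDerivAt_id x).sub_const μ).fun_pow 2
    have := (h1.neg).div_const (2*v)
    refine this.congr_deriv ?_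
    field_simp
  have := (hg.exp).const_mul ((Real.sqrt (2 * π * v))⁻¹)
  refine this.congr_deriv ?_
  rw [gaussianPDFReal_def]; ring

lemma tendsto_gaussianPDFReal_atBot (μ : ℝ) (v : ℝ≥0) :
    Tendsto (gaussianPDFReal μ v) atBot (𝓝 0) := by
  by_cases hv : v = 0
  · rw [hv, gaussianPDFReal_zero_var]; exact tendsto_const_nhds
  have hv' : (0:ℝ) < v := by positivity
  have h1 : Tendsto (fun x : ℝ => -(x - μ)^2 / (2*v)) atBot atBot := by
    apply Tendsto.atBot_div_const (by positivity)
    apply tendsto_neg_atTop_atBot.comp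
    have hsub : Tendsto (fun x : ℝ => x - μ) atBot atBot :=
      tendsto_atBot_add_const_right _ _ tendsto_id
    have habs : Tendsto (fun x : ℝ => |x - μ|) atBot atTop :=
      tendsto_abs_atBot_atTop.comp hsub
    have := (Filter.tendsto_pow_atTop (two_ne_zero)).comp habs
    exact this.congr (fun x => by simp [Function.comp, sq_abs])
  have := Real.tendsto_exp_atBot.comp h1
  have h2 := this.const_mul ((Real.sqrt (2 * π * v))⁻¹)
  simpa [gaussianPDFReal_def, Function.comp] using h2

lemma tendsto_gaussianPDFReal_atTop (μ : ℝ) (v : ℝ≥0) :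
    Tendsto (gaussianPDFReal μ v) atTop (𝓝 0) := by
  by_cases hv : v = 0
  · rw [hv, gaussianPDFReal_zero_var]; exact tendsto_const_nhds
  have hv' : (0:ℝ) < v := by positivity
  have h1 : Tendsto (fun x : ℝ => -(x - μ)^2 / (2*v)) atTop atBot := by
    apply Tendsto.atBot_div_const (by positivity)
    apply tendsto_neg_atTop_atBot.comp
    have : Tendsto (fun x : ℝ => x - μ) atTop atTop := tendsto_atTop_add_const_right _ _ tendsto_id
    exact ((Filter.tendsto_pow_atTop (two_ne_zero)).comp this)
  have := Real.tendsto_exp_atBot.comp h1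
  have h2 := this.const_mul ((Real.sqrt (2 * π * v))⁻¹)
  simpa [gaussianPDFReal_def, Function.comp] using h2

lemma integrable_sub_mul_gaussianPDFReal (μ : ℝ) {v : ℝ≥0} (hv : v ≠ 0) :
    Integrable (fun x => (x - μ) * gaussianPDFReal μ v x) := by
  have hv' : (0:ℝ) < v := by positivity
  have hb : (0:ℝ) < (2*v)⁻¹ := by positivity
  have h0 : Integrable (fun x : ℝ => x * Real.exp (-(2*(v:ℝ))⁻¹ * x^2)) :=
    integrable_mul_exp_neg_mul_sq hb
  have h1 : Integrable (fun x : ℝ => (x - μ) * Real.exp (-(2*(v:ℝ))⁻¹ * (x - μ)^2)) :=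
    h0.comp_sub_right μ
  have := h1.const_mul ((Real.sqrt (2 * π * v))⁻¹)
  refine this.congr ?_
  filter_upwards with x
  rw [gaussianPDFReal]
  ring_nf

lemma integral_Iic_sub_mul_gaussianPDFReal (μ : ℝ) {v : ℝ≥0} (hv : v ≠ 0) (x : ℝ) :
    ∫ s in Iic x, (s - μ) * gaussianPDFReal μ v s = -(v:ℝ) * gaussianPDFReal μ v x := by
  have hv' : (0:ℝ) < v := by positivity
  have hder : ∀ s ∈ Iic x, HasDerivAt (fun s => -(v:ℝ) * gaussianPDFReal μ v s)
      ((s - μ) * gaussianPDFReal μ v s) s := by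
    intro s _
    have := (hasDerivAt_gaussianPDFReal μ hv s).const_mul (-(v:ℝ))
    refine this.congr_deriv ?_
    field_simp
  have hint : IntegrableOn (fun s => (s - μ) * gaussianPDFReal μ v s) (Iic x) :=
    (integrable_sub_mul_gaussianPDFReal μ hv).integrableOn
  have htend : Tendsto (fun s => -(v:ℝ) * gaussianPDFReal μ v s) atBot (𝓝 0) := by
    simpa using (tendsto_gaussianPDFReal_atBot μ v).const_mul (-(v:ℝ))
  simpa using integral_Iic_of_hasDerivAt_of_tendsto' hder hint htend

lemma integral_Ioi_sub_mul_gaussianPDFReal (μ : ℝ) {v : ℝ≥0} (hv : v ≠ 0) (x : ℝ) :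
    ∫ s in Ioi x, (s - μ) * gaussianPDFReal μ v s = (v:ℝ) * gaussianPDFReal μ v x := by
  have hv' : (0:ℝ) < v := by positivity
  have hder : ∀ s ∈ Ici x, HasDerivAt (fun s => -(v:ℝ) * gaussianPDFReal μ v s)
      ((s - μ) * gaussianPDFReal μ v s) s := by
    intro s _
    have := (hasDerivAt_gaussianPDFReal μ hv s).const_mul (-(v:ℝ))
    refine this.congr_deriv ?_
    field_simp
  have hint : IntegrableOn (fun s => (s - μ) * gaussianPDFReal μ v s) (Ioi x) :=
    (integrable_sub_mul_gaussianPDFReal μ hv).integrableOn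
  have htend : Tendsto (fun s => -(v:ℝ) * gaussianPDFReal μ v s) atTop (𝓝 0) := by
    simpa using (tendsto_gaussianPDFReal_atTop μ v).const_mul (-(v:ℝ))
  have := integral_Ioi_of_hasDerivAt_of_tendsto' hder hint htend
  rw [this]; ring

lemma gaussianPDFReal_eq_std (μ : ℝ) {v : ℝ≥0} (hv : v ≠ 0) (x : ℝ) :
    gaussianPDFReal μ v x = (Real.sqrt v)⁻¹ * stdNormalPdf ((x - μ) / Real.sqrt v) := by
  have hv' : (0:ℝ) < v := by positivity
  have hs : (0:ℝ) < Real.sqrt v := Real.sqrt_pos.2 hv'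
  have hexp : -((x - μ) / Real.sqrt v) ^ 2 / 2 = -(x - μ)^2 / (2 * (v:ℝ)) := by
    rw [div_pow, Real.sq_sqrt hv'.le]; ring
  rw [gaussianPDFReal, stdNormalPdf, hexp,
    show (2 : ℝ) * π * (v:ℝ) = (2 * π) * (v:ℝ) by ring,
    Real.sqrt_mul (by positivity) (v:ℝ), mul_inv]
  ring

lemma stdNormalPdf_neg (u : ℝ) : stdNormalPdf (-u) = stdNormalPdf u := by
  simp [stdNormalPdf]

lemma inner_EI (μ : ℝ) (σ : ℝ≥0) (hσ : 0 < σ) (a t : ℝ) (ht : t ≠ 0) :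
    ∫ s, max (a - t * s) 0 ∂(gaussianReal μ (σ^2))
      = (a - t * μ) * stdNormalCdf ((a - t * μ) / (|t| * σ))
        + |t| * σ * stdNormalPdf ((a - t * μ) / (|t| * σ)) := by
  have hσ' : (0:ℝ) < σ := hσ
  have hv : (σ^2 : ℝ≥0) ≠ 0 := by positivity
  have hvc : ((σ^2 : ℝ≥0) : ℝ) = (σ:ℝ)^2 := by push_cast; ring
  have hsq : Real.sqrt ((σ^2 : ℝ≥0) : ℝ) = (σ:ℝ) := by
    rw [hvc, Real.sqrt_sq σ.coe_nonneg]
  set p : ℝ → ℝ := gaussianPDFReal μ (σ^2) with hp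
  have hpi : Integrable p := integrable_gaussianPDFReal μ (σ^2)
  have hpm : Integrable (fun s => (s - μ) * p s) := integrable_sub_mul_gaussianPDFReal μ hv
  rw [integral_fun_gaussianReal μ hv]
  rcases lt_or_gt_of_ne ht with htn | htp
  · -- t < 0 : region Ici (a/t)
    have hind : ∀ s, p s * max (a - t * s) 0
        = (Ici (a/t)).indicator (fun s => (a - t * μ) * p s - t * ((s - μ) * p s)) s := by
      intro s
      by_cases h : a/t ≤ s
      · rw [indicator_of_mem (show s ∈ Ici (a/t) from h),
          max_eq_left (by rw [div_le_iff_of_neg htn] at h; linarith)]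
        ring
      · rw [indicator_of_notMem (show s ∉ Ici (a/t) from h), max_eq_right, mul_zero]
        push_neg at h
        rw [lt_div_iff_of_neg htn] at h
        linarith
    calc ∫ s, p s * max (a - t * s) 0
        = ∫ s, (Ici (a/t)).indicator (fun s => (a - t * μ) * p s - t * ((s - μ) * p s)) s :=
          integral_congr_ae (Filter.Eventually.of_forall hind)
      _ = ∫ s in Ici (a/t), ((a - t * μ) * p s - t * ((s - μ) * p s)) :=
          integral_indicator measurableSet_Ici
      _ = ∫ s in Ioi (a/t), ((a - t * μ) * p s - t * ((s - μ) * p s)) :=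
          integral_Ici_eq_integral_Ioi
      _ = (a - t * μ) * (∫ s in Ioi (a/t), p s) - t * ∫ s in Ioi (a/t), (s - μ) * p s := by
          rw [integral_sub ((hpi.const_mul _).integrableOn) ((hpm.const_mul _).integrableOn),
            integral_const_mul, integral_const_mul]
      _ = (a - t * μ) * stdNormalCdf ((a - t * μ) / (|t| * σ))
            + |t| * σ * stdNormalPdf ((a - t * μ) / (|t| * σ)) := by
          rw [hp, integral_Ioi_gaussianPDFReal μ hv, integral_Ioi_sub_mul_gaussianPDFReal μ hv,
            gaussianPDFReal_eq_std μ hv, hsq]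
          have habs : |t| = -t := abs_of_neg htn
          have h1 : -((a / t - μ) / (σ:ℝ)) = (a - t * μ) / (|t| * σ) := by
            rw [habs]; field_simp
          have h2 : (a / t - μ) / (σ:ℝ) = -((a - t * μ) / (|t| * σ)) := by
            rw [← h1]; ring
          rw [h1, h2, stdNormalPdf_neg, hvc, habs]
          field_simp
          ring
  · -- t > 0 : region Iic (a/t)
    have hind : ∀ s, p s * max (a - t * s) 0
        = (Iic (a/t)).indicator (fun s => (a - t * μ) * p s - t * ((s - μ) * p s)) s := by
      intro s
      by_cases h : s ≤ a/t
      · rw [indicator_of_mem (show s ∈ Iic (a/t) from h),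
          max_eq_left (by rw [le_div_iff₀ htp] at h; linarith)]
        ring
      · rw [indicator_of_notMem (show s ∉ Iic (a/t) from h), max_eq_right, mul_zero]
        push_neg at h
        rw [div_lt_iff₀ htp] at h
        linarith
    calc ∫ s, p s * max (a - t * s) 0
        = ∫ s, (Iic (a/t)).indicator (fun s => (a - t * μ) * p s - t * ((s - μ) * p s)) s :=
          integral_congr_ae (Filter.Eventually.of_forall hind)
      _ = ∫ s in Iic (a/t), ((a - t * μ) * p s - t * ((s - μ) * p s)) :=
          integral_indicator measurableSet_Iic
      _ = (a - t * μ) * (∫ s in Iic (a/t), p s) - t * ∫ s in Iic (a/t), (s - μ) * p s := by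
          rw [integral_sub ((hpi.const_mul _).integrableOn) ((hpm.const_mul _).integrableOn),
            integral_const_mul, integral_const_mul]
      _ = (a - t * μ) * stdNormalCdf ((a - t * μ) / (|t| * σ))
            + |t| * σ * stdNormalPdf ((a - t * μ) / (|t| * σ)) := by
          rw [hp, integral_Iic_gaussianPDFReal μ hv, integral_Iic_sub_mul_gaussianPDFReal μ hv,
            gaussianPDFReal_eq_std μ hv, hsq]
          have habs : |t| = t := abs_of_pos htp
          have h1 : (a / t - μ) / (σ:ℝ) = (a - t * μ) / (|t| * σ) := by
            rw [habs]; field_simp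
          rw [h1, hvc, habs]
          field_simp
          ring

lemma integrable_abs_gaussianReal (μ : ℝ) {v : ℝ≥0} (hv : v ≠ 0) :
    Integrable (fun x => |x|) (gaussianReal μ v) := by
  rw [gaussianReal_of_var_ne_zero _ hv]
  have hd : (gaussianPDF μ v) = fun x => ((gaussianPDFReal μ v x).toNNReal : ℝ≥0∞) := by
    ext x; simp [gaussianPDF, ENNReal.ofReal]
  rw [hd, integrable_withDensity_iff_integrable_smul
    ((measurable_gaussianPDFReal μ v).real_toNNReal)]
  have hpi : Integrable (gaussianPDFReal μ v) := integrable_gaussianPDFReal μ v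
  have hpm : Integrable (fun x => (x - μ) * gaussianPDFReal μ v x) :=
    integrable_sub_mul_gaussianPDFReal μ hv
  refine Integrable.mono' (hpm.abs.add (hpi.const_mul |μ|)) ?_ ?_
  · exact (((measurable_gaussianPDFReal μ v).real_toNNReal).coe_nnreal_real.mul
      measurable_abs).aestronglyMeasurable.congr (by
        filter_upwards with x
        simp [NNReal.smul_def, smul_eq_mul])
  · filter_upwards with x
    have h0 : (0:ℝ) ≤ gaussianPDFReal μ v x := gaussianPDFReal_nonneg μ v x
    rw [NNReal.smul_def, smul_eq_mul, Real.coe_toNNReal _ h0, Real.norm_eq_abs,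
      abs_of_nonneg (by positivity)]
    have : gaussianPDFReal μ v x * |x| ≤ gaussianPDFReal μ v x * (|x - μ| + |μ|) := by
      apply mul_le_mul_of_nonneg_left _ h0
      calc |x| = |(x - μ) + μ| := by ring_nf
        _ ≤ |x - μ| + |μ| := abs_add_le _ _
    calc gaussianPDFReal μ v x * |x| ≤ gaussianPDFReal μ v x * (|x - μ| + |μ|) := this
      _ = |(x - μ) * gaussianPDFReal μ v x| + |μ| * gaussianPDFReal μ v x := by
          rw [abs_mul, abs_of_nonneg h0]; ring

/-- The Nested Expected Improvement formula: for independent `Z1 ~ N(μ1, 1)` and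
`Z2 ~ N(μ2, σ2²)` with `σ2 > 0`, `z0, f* ∈ ℝ`, and `Z = Z1 Z2 + z0`,
`E[max(f* − Z, 0)] = ∫ φ(t−μ1) [ (f*−z0−tμ2) Φ(u2 t) + |t| σ2 φ(u2 t) ] dt`
where `u2 t = (f*−z0−tμ2)/(|t| σ2)`. -/
theorem nested_expected_improvement
    {Ω : Type*} [MeasureSpace Ω] [IsProbabilityMeasure (ℙ : Measure Ω)]
    (Z1 Z2 : Ω → ℝ) (μ1 μ2 : ℝ) (σ2 : ℝ≥0) (hσ2 : 0 < σ2) (z0 fstar : ℝ)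
    (hZ1 : Measurable Z1) (hZ2 : Measurable Z2)
    (hlaw1 : Measure.map Z1 ℙ = gaussianReal μ1 1)
    (hlaw2 : Measure.map Z2 ℙ = gaussianReal μ2 (σ2 ^ 2))
    (hindep : IndepFun Z1 Z2 ℙ) :
    ∫ ω, max (fstar - (Z1 ω * Z2 ω + z0)) 0 ∂ℙ
      = ∫ t : ℝ, stdNormalPdf (t - μ1) *
          ((fstar - z0 - t * μ2) * stdNormalCdf ((fstar - z0 - t * μ2) / (|t| * (σ2 : ℝ)))
            + |t| * (σ2 : ℝ) * stdNormalPdf ((fstar - z0 - t * μ2) / (|t| * (σ2 : ℝ)))) := by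
  have hv2 : (σ2^2 : ℝ≥0) ≠ 0 := by positivity
  set ν1 := gaussianReal μ1 1 with hν1
  set ν2 := gaussianReal μ2 (σ2^2) with hν2
  have hjoint : Measure.map (fun ω => (Z1 ω, Z2 ω)) ℙ = ν1.prod ν2 := by
    rw [(indepFun_iff_map_prod_eq_prod_map_map hZ1.aemeasurable hZ2.aemeasurable).mp hindep,
      hlaw1, hlaw2]
  have hmeasf : Measurable (fun p : ℝ × ℝ => max (fstar - (p.1 * p.2 + z0)) 0) :=
    ((continuous_const.sub ((continuous_fst.mul continuous_snd).add
      continuous_const)).max continuous_const).measurable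
  have habs1 : Integrable (fun x => |x|) ν1 := integrable_abs_gaussianReal μ1 one_ne_zero
  have habs2 : Integrable (fun x => |x|) ν2 := integrable_abs_gaussianReal μ2 hv2
  have hint : Integrable (fun p : ℝ × ℝ => max (fstar - (p.1 * p.2 + z0)) 0) (ν1.prod ν2) := by
    refine Integrable.mono' ((integrable_const (|fstar - z0|)).add (habs1.mul_prod habs2))
      hmeasf.aestronglyMeasurable ?_
    filter_upwards with p
    rw [Real.norm_eq_abs, abs_of_nonneg (le_max_right _ _)]
    refine max_le ?_ (add_nonneg (abs_nonneg _) (mul_nonneg (abs_nonneg _) (abs_nonneg _)))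
    calc fstar - (p.1 * p.2 + z0) ≤ |fstar - z0| + |p.1 * p.2| := by
          have := abs_sub_abs_le_abs_sub (fstar - z0) (p.1 * p.2)
          have h1 : fstar - (p.1 * p.2 + z0) = (fstar - z0) - p.1 * p.2 := by ring
          rw [h1]
          calc (fstar - z0) - p.1 * p.2 ≤ |(fstar - z0) - p.1 * p.2| := le_abs_self _
            _ ≤ |fstar - z0| + |p.1 * p.2| := abs_sub _ _
      _ = |fstar - z0| + |p.1| * |p.2| := by rw [abs_mul]
  calc ∫ ω, max (fstar - (Z1 ω * Z2 ω + z0)) 0 ∂ℙ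
      = ∫ p : ℝ × ℝ, max (fstar - (p.1 * p.2 + z0)) 0
          ∂(Measure.map (fun ω => (Z1 ω, Z2 ω)) ℙ) := by
        exact (integral_map (hZ1.prodMk hZ2).aemeasurable
          hmeasf.aestronglyMeasurable).symm
    _ = ∫ t, (∫ s, max (fstar - (t * s + z0)) 0 ∂ν2) ∂ν1 := by
        rw [hjoint, integral_prod _ hint]
    _ = ∫ t, gaussianPDFReal μ1 1 t * (∫ s, max (fstar - (t * s + z0)) 0 ∂ν2) := by
        rw [hν1, integral_fun_gaussianReal μ1 one_ne_zero]
    _ = ∫ t : ℝ, stdNormalPdf (t - μ1) *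
          ((fstar - z0 - t * μ2) * stdNormalCdf ((fstar - z0 - t * μ2) / (|t| * (σ2 : ℝ)))
            + |t| * (σ2 : ℝ) * stdNormalPdf ((fstar - z0 - t * μ2) / (|t| * (σ2 : ℝ)))) := by
        apply integral_congr_ae
        have h0 : ∀ᵐ t : ℝ, t ≠ 0 := by
          rw [ae_iff]
          have : {t : ℝ | ¬ t ≠ 0} = {(0:ℝ)} := by ext u; simp
          rw [this]
          exact measure_singleton 0
        filter_upwards [h0] with t ht
        have hpdf1 : gaussianPDFReal μ1 1 t = stdNormalPdf (t - μ1) := by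
          rw [gaussianPDFReal_eq_std μ1 one_ne_zero]
          simp
        have hrw : (fun s => max (fstar - (t * s + z0)) 0)
            = fun s => max ((fstar - z0) - t * s) 0 := by
          funext s; congr 1; ring
        rw [hpdf1, hrw, hν2, inner_EI μ2 σ2 hσ2 (fstar - z0) t ht]
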